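/- Let ℓ ≥ 5 and let G be a finite simple graph in which every hole (induced cycle of length at least 4) has length exactly ℓ. Let C be a hole in G and v a vertex not on C that has both a neighbor and a non-neighbor on C. Then there is a path P of C of length at most two such that the set of neighbors of v on C equals the vertex set of P; in particular, if v has exactly the two endpoints of a length-two path of C as candidate neighbors, v is also adjacent to the middle vertex. -/
import Mathlib


/-- `f` is an embedding of an induced cycle (hole) of length `n` into `G`. -/
def IsHoleEmb {V : Type*} (G : SimpleGraph V) (n : ℕ) (f : ZMod n → V) : Prop :=
  4 ≤ n ∧ Function.Injective f ∧
    ∀ i j : ZMod n, G.Adj (f i) (f j) ↔ j = i + 1 ∨ i = j + 1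

/-- Every hole of `G` has length exactly `ℓ`. -/
def Monoholed {V : Type*} (G : SimpleGraph V) (ℓ : ℕ) : Prop :=
  ∀ (n : ℕ) (f : ZMod n → V), IsHoleEmb G n f → n = ℓ

lemma cast_inj_lt {n : ℕ} {s t : ℕ} (hs : s < n) (ht : t < n)
    (h : (s : ZMod n) = t) : s = t := by
  haveI : NeZero n := ⟨by omega⟩
  have h2 := congrArg ZMod.val h
  rwa [ZMod.val_cast_of_lt hs, ZMod.val_cast_of_lt ht] at h2

lemma succ_cast_iff {m : ℕ} (hm : 0 < m) (s t : ℕ) (hs : s < m) (ht : t < m) :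
    ((t : ZMod m) = (s : ZMod m) + 1) ↔ (t = s + 1 ∨ (s = m - 1 ∧ t = 0)) := by
  haveI : NeZero m := ⟨hm.ne'⟩
  have hcast : (s : ZMod m) + 1 = ((s + 1 : ℕ) : ZMod m) := by push_cast; ring
  rw [hcast]
  rcases lt_or_eq_of_le (Nat.succ_le_of_lt hs) with h1 | h1
  · constructor
    · intro h; exact Or.inl (cast_inj_lt ht h1 h)
    · rintro (rfl | ⟨rfl, rfl⟩)
      · rfl
      · omega
  · rw [show s + 1 = m from h1, ZMod.natCast_self]
    constructor
    · intro h
      have : m ∣ t := (ZMod.natCast_eq_zero_iff t m).mp h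
      exact Or.inr ⟨by omega, Nat.eq_zero_of_dvd_of_lt this ht⟩
    · rintro (rfl | ⟨h2, rfl⟩)
      · omega
      · simp

lemma zmod_succ_iff {m : ℕ} (hm : 0 < m) (i j : ZMod m) :
    j = i + 1 ↔ (j.val = i.val + 1 ∨ (i.val = m - 1 ∧ j.val = 0)) := by
  haveI : NeZero m := ⟨hm.ne'⟩
  have h := succ_cast_iff hm i.val j.val i.val_lt j.val_lt
  rwa [ZMod.natCast_zmod_val, ZMod.natCast_zmod_val] at h

lemma hole_of_gap {V : Type*} {G : SimpleGraph V} {n : ℕ} {f : ZMod n → V}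
    (hC : IsHoleEmb G n f) {v : V} (hv : v ∉ Set.range f)
    (a : ZMod n) (d : ℕ) (hd2 : 2 ≤ d) (hdn : d + 2 ≤ n)
    (ha : G.Adj v (f a)) (hb : G.Adj v (f (a + (d : ZMod n))))
    (hint : ∀ t : ℕ, 0 < t → t < d → ¬ G.Adj v (f (a + (t : ZMod n)))) :
    IsHoleEmb G (d + 2) (fun k : ZMod (d + 2) =>
      if k = 0 then v else f (a + ((k.val - 1 : ℕ) : ZMod n))) := by
  haveI : NeZero n := ⟨by omega⟩
  haveI : NeZero (d + 2) := ⟨by omega⟩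
  have hvN : ∀ t : ℕ, t ≤ d → (G.Adj v (f (a + (t : ZMod n))) ↔ (t = 0 ∨ t = d)) := by
    intro t htd
    constructor
    · intro h
      by_contra hc
      push_neg at hc
      exact hint t (by omega) (by omega) h
    · rintro (rfl | rfl)
      · simpa using ha
      · exact hb
  have e : ∀ x y : ZMod n, (a + x = a + y + 1) ↔ (x = y + 1) := fun x y => by
    rw [add_assoc, add_right_inj]
  have hfadj : ∀ s t : ℕ, s ≤ d → t ≤ d →
      (G.Adj (f (a + (s : ZMod n))) (f (a + (t : ZMod n))) ↔ (t = s + 1 ∨ s = t + 1)) := by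
    intro s t hs ht
    rw [hC.2.2, e, e,
        succ_cast_iff (show 0 < n by omega) s t (by omega) (by omega),
        succ_cast_iff (show 0 < n by omega) t s (by omega) (by omega)]
    omega
  refine ⟨by omega, ?_, ?_⟩
  · intro k k' hkk'
    dsimp only at hkk'
    by_cases hk : k = 0 <;> by_cases hk' : k' = 0
    · rw [hk, hk']
    · rw [if_pos hk, if_neg hk'] at hkk'
      exact absurd ⟨_, hkk'.symm⟩ hv
    · rw [if_neg hk, if_pos hk'] at hkk'
      exact absurd ⟨_, hkk'⟩ hv
    · rw [if_neg hk, if_neg hk'] at hkk'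
      have h1 := hC.2.1 hkk'
      rw [add_right_inj] at h1
      have hkv := k.val_lt
      have hkv' := k'.val_lt
      have h2 := cast_inj_lt (show k.val - 1 < n by omega) (show k'.val - 1 < n by omega) h1
      have hk0 : k.val ≠ 0 := fun h => hk ((ZMod.val_eq_zero k).mp h)
      have hk0' : k'.val ≠ 0 := fun h => hk' ((ZMod.val_eq_zero k').mp h)
      exact ZMod.val_injective _ (by omega)
  · intro i j
    dsimp only
    rw [zmod_succ_iff (show 0 < d + 2 by omega) i j,
        zmod_succ_iff (show 0 < d + 2 by omega) j i]
    have hiv := i.val_lt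
    have hjv := j.val_lt
    by_cases hi : i = 0 <;> by_cases hj : j = 0
    · rw [if_pos hi, if_pos hj, hi, hj]
      simp only [ZMod.val_zero]
      exact ⟨fun h => (G.irrefl h).elim, fun h => absurd h (by omega)⟩
    · have hj0 : j.val ≠ 0 := fun h => hj ((ZMod.val_eq_zero j).mp h)
      rw [if_pos hi, if_neg hj, hi, hvN (j.val - 1) (by omega)]
      simp only [ZMod.val_zero, and_true, true_and, eq_self_iff_true]
      omega
    · have hi0 : i.val ≠ 0 := fun h => hi ((ZMod.val_eq_zero i).mp h)
      rw [if_neg hi, if_pos hj, hj, G.adj_comm, hvN (i.val - 1) (by omega)]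
      simp only [ZMod.val_zero, and_true, true_and, eq_self_iff_true]
      omega
    · have hi0 : i.val ≠ 0 := fun h => hi ((ZMod.val_eq_zero i).mp h)
      have hj0 : j.val ≠ 0 := fun h => hj ((ZMod.val_eq_zero j).mp h)
      rw [if_neg hi, if_neg hj, hfadj (i.val - 1) (j.val - 1) (by omega) (by omega)]
      omega

/-- In an `ℓ`-monoholed graph (`ℓ ≥ 5`), any vertex off a hole `C`
with both a neighbor and a non-neighbor on `C` has its neighborhood on `C` equal
to the vertex set of a subpath of `C` of length at most two. -/
theorem stmt2 {V : Type*} [Fintype V] {ℓ : ℕ} (hℓ : 5 ≤ ℓ) (G : SimpleGraph V)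
    (hmono : Monoholed G ℓ) {n : ℕ} {f : ZMod n → V} (hC : IsHoleEmb G n f)
    {v : V} (hv : v ∉ Set.range f)
    (hnb : ∃ u ∈ Set.range f, G.Adj v u) (hnn : ∃ u ∈ Set.range f, ¬G.Adj v u) :
    ∃ (i : ZMod n) (k : ℕ), k ≤ 2 ∧
      {u | u ∈ Set.range f ∧ G.Adj v u} =
        {u | ∃ t : ℕ, t ≤ k ∧ u = f (i + (t : ZMod n))} := by
  classical
  have hn : n = ℓ := hmono n f hC
  have h5 : 5 ≤ n := hn ▸ hℓ
  haveI : NeZero n := ⟨by omega⟩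
  obtain ⟨u0, ⟨a0, rfl⟩, ha0⟩ := hnb
  obtain ⟨u1, ⟨b1, rfl⟩, hb1⟩ := hnn
  have hstep : ∃ a : ZMod n, G.Adj v (f a) ∧ ¬ G.Adj v (f (a + 1)) := by
    by_contra h
    push_neg at h
    have hall : ∀ t : ℕ, G.Adj v (f (a0 + (t : ZMod n))) := by
      intro t
      induction t with
      | zero => simpa using ha0
      | succ t ih =>
        have h2 := h _ ih
        have e : a0 + ((t + 1 : ℕ) : ZMod n) = a0 + (t : ZMod n) + 1 := by push_cast; ring
        rwa [e]
    have hb : b1 = a0 + (((b1 - a0).val : ℕ) : ZMod n) := by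
      rw [ZMod.natCast_zmod_val]; ring
    exact hb1 (hb ▸ hall _)
  obtain ⟨a, haN, ha1⟩ := hstep
  have hrep : ∀ b : ZMod n, ∃ t : ℕ, t < n ∧ b = a + (t : ZMod n) :=
    fun b => ⟨(b - a).val, (b - a).val_lt, by rw [ZMod.natCast_zmod_val]; ring⟩
  by_cases hrest : ∃ t : ℕ, 2 ≤ t ∧ t < n ∧ G.Adj v (f (a + (t : ZMod n)))
  case neg =>
    refine ⟨a, 0, by omega, ?_⟩
    ext u
    simp only [Set.mem_setOf_eq]
    constructor
    · rintro ⟨⟨b, rfl⟩, hadj⟩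
      obtain ⟨t, htn, rfl⟩ := hrep b
      have ht0 : t = 0 := by
        by_contra ht
        rcases eq_or_ne t 1 with rfl | ht1
        · exact ha1 (by simpa using hadj)
        · exact hrest ⟨t, by omega, htn, hadj⟩
      exact ⟨0, le_refl 0, by rw [ht0]⟩
    · rintro ⟨t, ht, rfl⟩
      have ht0 : t = 0 := by omega
      subst ht0
      exact ⟨⟨_, rfl⟩, by simpa using haN⟩
  case pos =>
    have hP : ∃ t, 2 ≤ t ∧ t < n ∧ G.Adj v (f (a + (t : ZMod n))) := hrest
    obtain ⟨hd2, hdn, hdadj⟩ := Nat.find_spec hP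
    set d := Nat.find hP with hdd
    have hint : ∀ s : ℕ, 0 < s → s < d → ¬ G.Adj v (f (a + (s : ZMod n))) := by
      intro s hs1 hsd hadj
      rcases eq_or_ne s 1 with rfl | hs2
      · exact ha1 (by simpa using hadj)
      · exact Nat.find_min hP hsd ⟨by omega, by omega, hadj⟩
    by_cases hcase : d + 2 ≤ n
    · have hh := hole_of_gap hC hv a d hd2 hcase haN hdadj hint
      have hd2n := hmono _ _ hh
      have hdn2 : d = n - 2 := by omega
      have hdadj2 : G.Adj v (f (a + ((n - 2 : ℕ) : ZMod n))) := by rw [← hdn2]; exact hdadj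
      have e1 : a + ((n - 2 : ℕ) : ZMod n) + ((1 : ℕ) : ZMod n) = a + ((n - 1 : ℕ) : ZMod n) := by
        have h' : (n - 2) + 1 = n - 1 := by omega
        rw [← h']; push_cast; ring
      have e2 : a + ((n - 2 : ℕ) : ZMod n) + ((2 : ℕ) : ZMod n) = a := by
        have h' : ((n - 2 : ℕ) : ZMod n) + ((2 : ℕ) : ZMod n) = ((n : ℕ) : ZMod n) := by
          rw [← Nat.cast_add]; congr 1; omega
        rw [add_assoc, h', ZMod.natCast_self, add_zero]
      by_cases hlast : G.Adj v (f (a + ((n - 1 : ℕ) : ZMod n)))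
      · refine ⟨a + ((n - 2 : ℕ) : ZMod n), 2, le_refl 2, ?_⟩
        ext u
        simp only [Set.mem_setOf_eq]
        constructor
        · rintro ⟨⟨b, rfl⟩, hadj⟩
          obtain ⟨t, htn, rfl⟩ := hrep b
          have htc : t = 0 ∨ t = n - 2 ∨ t = n - 1 := by
            by_contra hc
            push_neg at hc
            exact hint t (by omega) (by omega) hadj
          rcases htc with rfl | rfl | rfl
          · refine ⟨2, le_refl 2, ?_⟩
            rw [e2]; congr 1; push_cast; ring
          · refine ⟨0, by omega, ?_⟩
            congr 1; push_cast; ring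
          · refine ⟨1, by omega, ?_⟩
            rw [e1]
        · rintro ⟨t, ht, rfl⟩
          interval_cases t
          · refine ⟨⟨_, rfl⟩, ?_⟩
            have e0 : a + ((n - 2 : ℕ) : ZMod n) + ((0 : ℕ) : ZMod n)
                = a + ((n - 2 : ℕ) : ZMod n) := by push_cast; ring
            rw [e0]; exact hdadj2
          · rw [e1]; exact ⟨⟨_, rfl⟩, hlast⟩
          · rw [e2]; exact ⟨⟨_, rfl⟩, haN⟩
      · exfalso
        have hh4 := hole_of_gap hC hv (a + ((n - 2 : ℕ) : ZMod n)) 2 (le_refl 2) (by omega)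
          hdadj2 (by rw [e2]; exact haN) ?_
        · have := hmono _ _ hh4
          omega
        · intro t ht1 ht2
          have ht : t = 1 := by omega
          rw [ht, e1]
          exact hlast
    · have hdn1 : d = n - 1 := by omega
      have hdadj1 : G.Adj v (f (a + ((n - 1 : ℕ) : ZMod n))) := by rw [← hdn1]; exact hdadj
      have e1 : a + ((n - 1 : ℕ) : ZMod n) + ((1 : ℕ) : ZMod n) = a := by
        have h' : ((n - 1 : ℕ) : ZMod n) + ((1 : ℕ) : ZMod n) = ((n : ℕ) : ZMod n) := by
          rw [← Nat.cast_add]; congr 1; omega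
        rw [add_assoc, h', ZMod.natCast_self, add_zero]
      refine ⟨a + ((n - 1 : ℕ) : ZMod n), 1, by omega, ?_⟩
      ext u
      simp only [Set.mem_setOf_eq]
      constructor
      · rintro ⟨⟨b, rfl⟩, hadj⟩
        obtain ⟨t, htn, rfl⟩ := hrep b
        have htc : t = 0 ∨ t = n - 1 := by
          by_contra hc
          push_neg at hc
          exact hint t (by omega) (by omega) hadj
        rcases htc with rfl | rfl
        · refine ⟨1, le_refl 1, ?_⟩
          rw [e1]; congr 1; push_cast; ring
        · refine ⟨0, by omega, ?_⟩
          congr 1; push_cast; ring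
      · rintro ⟨t, ht, rfl⟩
        interval_cases t
        · refine ⟨⟨_, rfl⟩, ?_⟩
          have e0 : a + ((n - 1 : ℕ) : ZMod n) + ((0 : ℕ) : ZMod n)
              = a + ((n - 1 : ℕ) : ZMod n) := by push_cast; ring
          rw [e0]; exact hdadj1
        · rw [e1]; exact ⟨⟨_, rfl⟩, haN⟩
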